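/- Let G be a connected oriented loopless multigraph with oriented incidence matrix D ∈ ℝ^{V×E}. Then the Jacobian Jac(G) = Div⁰(G)/Prin(G) is isomorphic as an abelian group to B_I^#/B_I. -/

import Mathlib

set_option linter.unusedSectionVars false
set_option maxHeartbeats 1000000


open Matrix Finset

section MatrixSpaces

variable {ι κ : Type*} [Fintype ι] [Fintype κ]

/-- The cycle space `Z = ker D`. -/
def cycleSpace (D : Matrix ι κ ℝ) : Submodule ℝ (κ → ℝ) :=
  LinearMap.ker D.mulVecLin

/-- The cut space `B = Z^⊥`, the orthogonal complement of the cycle space with respect to the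
standard inner product. -/
def cutSpace (D : Matrix ι κ ℝ) : Submodule ℝ (κ → ℝ) where
  carrier := {x | ∀ z ∈ cycleSpace D, x ⬝ᵥ z = 0}
  add_mem' := by
    intro a b ha hb z hz
    simp [add_dotProduct, ha z hz, hb z hz]
  zero_mem' := by
    intro z hz
    simp
  smul_mem' := by
    intro c a ha z hz
    simp [smul_dotProduct, ha z hz]

/-- The cut lattice `B_I = B ∩ ℤ^E`. -/
def cutLattice (D : Matrix ι κ ℝ) : Set (κ → ℝ) :=
  {x | x ∈ cutSpace D ∧ ∀ e, ∃ k : ℤ, x e = (k : ℝ)}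

/-- The cut lattice `B_I`, as an additive subgroup. -/
def cutLatticeSub (D : Matrix ι κ ℝ) : AddSubgroup (κ → ℝ) where
  carrier := cutLattice D
  add_mem' := by
    rintro a b ⟨ha, ha'⟩ ⟨hb, hb'⟩
    refine ⟨Submodule.add_mem _ ha hb, fun e => ?_⟩
    obtain ⟨k, hk⟩ := ha' e
    obtain ⟨l, hl⟩ := hb' e
    exact ⟨k + l, by simp [hk, hl]⟩
  zero_mem' := ⟨Submodule.zero_mem _, fun e => ⟨0, by simp⟩⟩
  neg_mem' := by
    rintro a ⟨ha, ha'⟩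
    refine ⟨Submodule.neg_mem _ ha, fun e => ?_⟩
    obtain ⟨k, hk⟩ := ha' e
    exact ⟨-k, by simp [hk]⟩

/-- The dual lattice `B_I^# = {x ∈ B : ⟨x,b⟩ ∈ ℤ for all b ∈ B_I}`, as an additive subgroup. -/
def dualLatticeSub (D : Matrix ι κ ℝ) : AddSubgroup (κ → ℝ) where
  carrier := {x | x ∈ cutSpace D ∧ ∀ b ∈ cutLattice D, ∃ k : ℤ, x ⬝ᵥ b = (k : ℝ)}
  add_mem' := by
    rintro a b ⟨ha, ha'⟩ ⟨hb, hb'⟩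
    refine ⟨Submodule.add_mem _ ha hb, fun c hc => ?_⟩
    obtain ⟨k, hk⟩ := ha' c hc
    obtain ⟨l, hl⟩ := hb' c hc
    exact ⟨k + l, by simp [add_dotProduct, hk, hl]⟩
  zero_mem' := ⟨Submodule.zero_mem _, fun c _ => ⟨0, by simp⟩⟩
  neg_mem' := by
    rintro a ⟨ha, ha'⟩
    refine ⟨Submodule.neg_mem _ ha, fun c hc => ?_⟩
    obtain ⟨k, hk⟩ := ha' c hc
    exact ⟨-k, by simp [neg_dotProduct, hk]⟩

end MatrixSpaces

section Incidence

variable {V E : Type*} [Fintype V] [Fintype E] [DecidableEq V]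

/-- The oriented incidence matrix of an oriented multigraph with head map `h` and
tail map `t`. -/
def incMatrix (h t : E → V) : Matrix V E ℝ :=
  fun v e => if v = h e then 1 else if v = t e then -1 else 0

/-- The edge-multiplicity function determined by the orientation maps `h` and `t`. -/
def wOf (h t : E → V) (u v : V) : ℕ :=
  (Finset.univ.filter fun e => (h e = u ∧ t e = v) ∨ (h e = v ∧ t e = u)).card

end Incidence


variable {V : Type*}

/-- Degree of a vertex in the loopless multigraph with edge-multiplicity function `w`. -/
def mgDeg [Fintype V] (w : V → V → ℕ) (v : V) : ℕ := ∑ u, w v u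

/-- The Laplacian of the multigraph, as an additive homomorphism on `V → ℤ`. -/
def mgLap [Fintype V] (w : V → V → ℕ) : (V → ℤ) →+ (V → ℤ) :=
  AddMonoidHom.mk' (fun f v => (mgDeg w v : ℤ) * f v - ∑ u, (w v u : ℤ) * f u)
    (by
      intro f g
      funext v
      simp [mul_add, Finset.sum_add_distrib]
      ring)

/-- The group `Div⁰(G)` of divisors of degree zero. -/
def mgDiv0 (V : Type*) [Fintype V] : AddSubgroup (V → ℤ) :=
  AddMonoidHom.ker
    (AddMonoidHom.mk' (fun D : V → ℤ => ∑ v, D v)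
      (by intro a b; simp [Finset.sum_add_distrib]))

/-- The group `Prin(G)` of principal divisors, the image of the Laplacian. -/
def mgPrin [Fintype V] (w : V → V → ℕ) : AddSubgroup (V → ℤ) := (mgLap w).range

/-- The Jacobian `Jac(G) = Div⁰(G)/Prin(G)`. -/
abbrev mgJac (V : Type*) [Fintype V] (w : V → V → ℕ) : Type _ :=
  mgDiv0 V ⧸ ((mgPrin w).addSubgroupOf (mgDiv0 V))

/-- The underlying simple graph: `u` adjacent to `v` iff `u ≠ v` and `w u v > 0`. -/
def mgUnderlying (w : V → V → ℕ) : SimpleGraph V :=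
  SimpleGraph.fromRel (fun u v => 0 < w u v)


section Aux
variable {ι κ : Type*} [Fintype ι] [Fintype κ] [DecidableEq ι] (D : Matrix ι κ ℝ)

lemma vecMul_mem_cutSpace (y : ι → ℝ) : y ᵥ* D ∈ cutSpace D := by
  intro z hz
  have hz0 : D *ᵥ z = 0 := hz
  rw [← dotProduct_mulVec, hz0, dotProduct_zero]

/-- transport of cycleSpace to EuclideanSpace -/
noncomputable def Lq (κ : Type*) : (κ → ℝ) ≃ₗ[ℝ] EuclideanSpace ℝ κ :=
  (WithLp.linearEquiv 2 ℝ (κ → ℝ)).symm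

lemma inner_eq_dot {κ : Type*} [Fintype κ] (x y : EuclideanSpace ℝ κ) :
    (inner ℝ x y : ℝ) = ((Lq κ).symm x) ⬝ᵥ ((Lq κ).symm y) := by
  simp [PiLp.inner_apply, RCLike.inner_apply, dotProduct, Lq, mul_comm]

lemma mem_cutSpace_of_range (x : κ → ℝ) (hx : x ∈ cutSpace D) : ∃ y : ι → ℝ, y ᵥ* D = x := by
  classical
  set Z : Submodule ℝ (EuclideanSpace ℝ κ) := (cycleSpace D).map (Lq κ).toLinearMap
  set U : Submodule ℝ (EuclideanSpace ℝ κ) :=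
    (LinearMap.range D.vecMulLinear).map (Lq κ).toLinearMap
  have hUZ : Uᗮ ≤ Z := by
    intro w hw
    have hDw : D *ᵥ ((Lq κ).symm w) = 0 := by
      funext v
      have hv : (inner ℝ ((Lq κ).toLinearMap (Pi.single v 1 ᵥ* D)) w : ℝ) = 0 :=
        hw _ ⟨_, ⟨Pi.single v 1, rfl⟩, rfl⟩
      rw [inner_eq_dot] at hv
      have : ((Lq κ).symm ((Lq κ).toLinearMap (Pi.single v 1 ᵥ* D))) = Pi.single v 1 ᵥ* D := by
        exact (Lq κ).symm_apply_apply _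
      rw [this, single_one_vecMul] at hv
      simpa [mulVec, Matrix.row] using hv
    exact ⟨(Lq κ).symm w, hDw, by simp⟩
  have hx' : (Lq κ x : EuclideanSpace ℝ κ) ∈ Zᗮ := by
    rw [Submodule.mem_orthogonal]
    rintro u ⟨z, hz, rfl⟩
    rw [inner_eq_dot]
    simp only [LinearEquiv.coe_coe, LinearEquiv.symm_apply_apply]
    rw [dotProduct_comm]
    exact hx z hz
  have hZU : Zᗮ ≤ U := by
    have := Submodule.orthogonal_le hUZ
    rwa [Submodule.orthogonal_orthogonal] at this
  obtain ⟨u, ⟨y, hy⟩, hu⟩ := hZU hx'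
  refine ⟨y, ?_⟩
  have := congrArg (Lq κ).symm hu
  simp only [LinearEquiv.coe_coe, LinearEquiv.symm_apply_apply] at this
  rw [← this, ← hy]
  exact ((Lq κ).symm_apply_apply _)

lemma exists_decomp (x : κ → ℝ) :
    ∃ z b : κ → ℝ, x = z + b ∧ D *ᵥ z = 0 ∧ b ∈ cutSpace D := by
  classical
  set Z : Submodule ℝ (EuclideanSpace ℝ κ) := (cycleSpace D).map (Lq κ).toLinearMap
  obtain ⟨y, hy, z, hz, hsum⟩ := Z.exists_add_mem_mem_orthogonal (Lq κ x)
  obtain ⟨y0, hy0, rfl⟩ := hy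
  refine ⟨y0, (Lq κ).symm z, ?_, hy0, ?_⟩
  · have := congrArg (Lq κ).symm hsum
    simpa using this
  · intro c hc
    have := hz _ ⟨c, hc, rfl⟩
    rw [inner_eq_dot] at this
    simpa [dotProduct_comm] using this

end Aux


section CombAux
variable {V E : Type*} [Fintype V] [Fintype E] [DecidableEq V] (h t : E → V)

lemma vecMul_inc (hne : ∀ e, h e ≠ t e) (y : V → ℝ) (e : E) :
    (y ᵥ* incMatrix h t) e = y (h e) - y (t e) := by
  simp only [vecMul, dotProduct, incMatrix]
  have key : ∀ v, y v * (if v = h e then (1:ℝ) else if v = t e then -1 else 0)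
      = (if v = h e then y v else 0) + (if v = t e then -(y v) else 0) := by
    intro v
    have h0 : ¬ h e = t e := hne e
    have h0' : ¬ t e = h e := fun hc => hne e hc.symm
    by_cases h1 : v = h e
    · have h2 : ¬ v = t e := fun hc => hne e (h1.symm.trans hc)
      simp [h1, h2, h0, h0']
    · by_cases h2 : v = t e <;> simp [h1, h2, h0, h0']
  rw [Finset.sum_congr rfl fun v _ => key v, Finset.sum_add_distrib,
    Finset.sum_ite_eq' Finset.univ (h e) y,
    Finset.sum_ite_eq' Finset.univ (t e) (fun v => -(y v))]
  simp [sub_eq_add_neg]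

lemma colsum_inc (hne : ∀ e, h e ≠ t e) (e : E) :
    ∑ v, incMatrix h t v e = 0 := by
  simp only [incMatrix]
  have key : ∀ v, (if v = h e then (1:ℝ) else if v = t e then -1 else 0)
      = (if v = h e then (1:ℝ) else 0) + (if v = t e then -1 else 0) := by
    intro v
    have h0 : ¬ h e = t e := hne e
    have h0' : ¬ t e = h e := fun hc => hne e hc.symm
    by_cases h1 : v = h e
    · have h2 : ¬ v = t e := fun hc => hne e (h1.symm.trans hc)
      simp [h1, h2, h0, h0']
    · by_cases h2 : v = t e <;> simp [h1, h2, h0, h0']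
  rw [Finset.sum_congr rfl fun v _ => key v, Finset.sum_add_distrib,
    Finset.sum_ite_eq' Finset.univ (h e) (fun _ => (1:ℝ)),
    Finset.sum_ite_eq' Finset.univ (t e) (fun _ => (-1:ℝ))]
  simp

lemma lap_eq (hne : ∀ e, h e ≠ t e) (y : V → ℤ) (v : V) :
    mgLap (wOf h t) y v =
      ∑ e, (if h e = v then y v - y (t e) else if t e = v then y v - y (h e) else 0) := by
  have lhs : mgLap (wOf h t) y v = ∑ u, ((wOf h t v u : ℤ)) * (y v - y u) := by
    simp only [mgLap, AddMonoidHom.mk'_apply, mgDeg]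
    push_cast
    rw [Finset.sum_mul, ← Finset.sum_sub_distrib]
    exact Finset.sum_congr rfl (by intros; ring)
  rw [lhs]
  have step : ∀ u, ((wOf h t v u : ℤ)) * (y v - y u)
      = ∑ e, (if ((h e = v ∧ t e = u) ∨ (h e = u ∧ t e = v)) then (y v - y u) else 0) := by
    intro u
    rw [← Finset.sum_filter, Finset.sum_const, wOf]
    simp [nsmul_eq_mul]
  rw [Finset.sum_congr rfl (fun u _ => step u), Finset.sum_comm]
  refine Finset.sum_congr rfl (fun e _ => ?_)
  by_cases h1 : h e = v
  · have h2 : ¬ t e = v := fun hc => hne e (h1.trans hc.symm)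
    have key : ∀ u, (if ((h e = v ∧ t e = u) ∨ (h e = u ∧ t e = v)) then (y v - y u) else 0)
        = (if u = t e then y v - y u else 0) := by
      intro u
      by_cases h3 : u = t e
      · rw [if_pos (Or.inl ⟨h1, h3.symm⟩), if_pos h3]
      · have hn : ¬ ((h e = v ∧ t e = u) ∨ (h e = u ∧ t e = v)) := by
          rintro (⟨_, h4⟩ | ⟨_, h5⟩)
          · exact h3 h4.symm
          · exact h2 h5
        rw [if_neg hn, if_neg h3]
    rw [Finset.sum_congr rfl fun u _ => key u,
      Finset.sum_ite_eq' Finset.univ (t e) (fun u => y v - y u)]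
    simp [h1, h2]
  · by_cases h2 : t e = v
    · have key : ∀ u, (if ((h e = v ∧ t e = u) ∨ (h e = u ∧ t e = v)) then (y v - y u) else 0)
          = (if u = h e then y v - y u else 0) := by
        intro u
        by_cases h3 : u = h e
        · rw [if_pos (Or.inr ⟨h3.symm, h2⟩), if_pos h3]
        · have hn : ¬ ((h e = v ∧ t e = u) ∨ (h e = u ∧ t e = v)) := by
            rintro (⟨h4, _⟩ | ⟨h5, _⟩)
            · exact h1 h4
            · exact h3 h5.symm
          rw [if_neg hn, if_neg h3]
      rw [Finset.sum_congr rfl fun u _ => key u,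
        Finset.sum_ite_eq' Finset.univ (h e) (fun u => y v - y u)]
      simp [h1, h2]
    · have key : ∀ u, (if ((h e = v ∧ t e = u) ∨ (h e = u ∧ t e = v)) then (y v - y u) else 0)
          = 0 := by
        intro u
        have hn : ¬ ((h e = v ∧ t e = u) ∨ (h e = u ∧ t e = v)) := by
          rintro (⟨h4, _⟩ | ⟨_, h5⟩)
          · exact h1 h4
          · exact h2 h5
        rw [if_neg hn]
      rw [Finset.sum_congr rfl fun u _ => key u]
      simp [h1, h2]

lemma mulVec_vecMul_eq_lap (hne : ∀ e, h e ≠ t e) (y : V → ℤ) :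
    incMatrix h t *ᵥ ((fun v => (y v : ℝ)) ᵥ* incMatrix h t)
      = fun v => ((mgLap (wOf h t) y v : ℤ) : ℝ) := by
  funext v
  rw [lap_eq h t hne y v]
  push_cast
  simp only [mulVec, dotProduct]
  refine Finset.sum_congr rfl fun e _ => ?_
  rw [vecMul_inc h t hne]
  simp only [incMatrix]
  by_cases h1 : v = h e
  · have h2 : ¬ t e = v := fun hc => hne e (h1.symm.trans hc.symm ▸ rfl)
    rw [if_pos h1, if_pos h1.symm]
    subst h1
    ring
  · by_cases h2 : v = t e
    · have h1' : ¬ h e = v := fun hc => h1 hc.symm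
      rw [if_neg h1, if_pos h2, if_neg h1', if_pos h2.symm]
      subst h2
      ring
    · have h1' : ¬ h e = v := fun hc => h1 hc.symm
      have h2' : ¬ t e = v := fun hc => h2 hc.symm
      rw [if_neg h1, if_neg h2, if_neg h1', if_neg h2']
      ring

end CombAux

section CombAux2
variable {V E : Type*} [Fintype V] [Fintype E] [DecidableEq V] (h t : E → V)

lemma adj_exists_edge {u v : V} (huv : (mgUnderlying (wOf h t)).Adj u v) :
    ∃ e, (h e = u ∧ t e = v) ∨ (h e = v ∧ t e = u) := by
  have hw : 0 < wOf h t u v ∨ 0 < wOf h t v u := by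
    simpa [mgUnderlying, SimpleGraph.fromRel_adj] using huv.2
  have key : ∀ a b : V, 0 < wOf h t a b → ∃ e, (h e = a ∧ t e = b) ∨ (h e = b ∧ t e = a) := by
    intro a b hab
    obtain ⟨e, he⟩ := Finset.card_pos.mp hab
    exact ⟨e, (Finset.mem_filter.mp he).2⟩
  rcases hw with hw | hw
  · exact key u v hw
  · obtain ⟨e, he⟩ := key v u hw
    exact ⟨e, he.symm⟩

lemma adj_int_diff (y : V → ℝ) (hy : ∀ e, ∃ k : ℤ, y (h e) - y (t e) = k)
    {u v : V} (huv : (mgUnderlying (wOf h t)).Adj u v) : ∃ k : ℤ, y u - y v = k := by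
  obtain ⟨e, he | he⟩ := adj_exists_edge h t huv
  · obtain ⟨k, hk⟩ := hy e
    exact ⟨k, by rw [← he.1, ← he.2]; exact hk⟩
  · obtain ⟨k, hk⟩ := hy e
    refine ⟨-k, by rw [← he.1, ← he.2]; push_cast; linarith⟩

lemma reach_int_diff (y : V → ℝ) (hy : ∀ e, ∃ k : ℤ, y (h e) - y (t e) = k)
    {a b : V} (hr : (mgUnderlying (wOf h t)).Reachable a b) :
    ∃ k : ℤ, y a - y b = k := by
  obtain ⟨w⟩ := hr
  induction w with
  | nil => exact ⟨0, by simp⟩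
  | cons ha p ih =>
    obtain ⟨k₁, hk₁⟩ := adj_int_diff h t y hy ha
    obtain ⟨k₂, hk₂⟩ := ih
    exact ⟨k₁ + k₂, by push_cast; linarith⟩

lemma mulVec_single_edge [DecidableEq E] (hne : ∀ e, h e ≠ t e) (e : E) :
    incMatrix h t *ᵥ Pi.single e (1:ℝ)
      = fun v => (Pi.single (h e) (1:ℝ) v - Pi.single (t e) (1:ℝ) v) := by
  funext v
  rw [Matrix.mulVec_single]
  simp only [incMatrix, Pi.single_apply, mul_one]
  have h0 : ¬ h e = t e := hne e
  have h0' : ¬ t e = h e := fun hc => hne e hc.symm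
  by_cases h1 : v = h e
  · have h2 : ¬ v = t e := fun hc => hne e (h1.symm.trans hc)
    simp [h1, h2, h0, h0', incMatrix]
  · by_cases h2 : v = t e <;> simp [h1, h2, h0, h0', incMatrix]

lemma reach_single_diff (hne : ∀ e, h e ≠ t e) {a b : V}
    (hr : (mgUnderlying (wOf h t)).Reachable a b) :
    ∃ x : E → ℝ, incMatrix h t *ᵥ x
      = fun v => (Pi.single a (1:ℝ) v - Pi.single b (1:ℝ) v) := by
  classical
  obtain ⟨w⟩ := hr
  induction w with
  | nil => exact ⟨0, by funext v; simp [Matrix.mulVec_zero]⟩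
  | @cons u u' b ha p ih =>
    obtain ⟨x₂, hx₂⟩ := ih
    obtain ⟨e, he | he⟩ := adj_exists_edge h t ha
    · refine ⟨Pi.single e 1 + x₂, ?_⟩
      funext v
      rw [Matrix.mulVec_add]
      have h1 := congrFun (mulVec_single_edge h t hne e) v
      have h2 := congrFun hx₂ v
      rw [Pi.add_apply, h1, h2, he.1, he.2]
      ring
    · refine ⟨-Pi.single e 1 + x₂, ?_⟩
      funext v
      rw [Matrix.mulVec_add, Matrix.mulVec_neg]
      have h1 := congrFun (mulVec_single_edge h t hne e) v
      have h2 := congrFun hx₂ v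
      rw [Pi.add_apply, Pi.neg_apply, h1, h2, he.1, he.2]
      ring

lemma cutLattice_int_rep (hne : ∀ e, h e ≠ t e)
    (hconn : (mgUnderlying (wOf h t)).Connected) {x : E → ℝ}
    (hx : x ∈ cutLattice (incMatrix h t)) :
    ∃ y : V → ℤ, (fun v => (y v : ℝ)) ᵥ* incMatrix h t = x := by
  obtain ⟨yr, hyr⟩ := mem_cutSpace_of_range (incMatrix h t) x hx.1
  have hint : ∀ e, ∃ k : ℤ, yr (h e) - yr (t e) = k := by
    intro e
    obtain ⟨k, hk⟩ := hx.2 e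
    refine ⟨k, ?_⟩
    rw [← hk, ← hyr, vecMul_inc h t hne]
  obtain ⟨v₀⟩ := hconn.nonempty
  choose k hk using fun v => reach_int_diff h t yr hint (hconn.preconnected v v₀)
  refine ⟨k, ?_⟩
  funext e
  rw [vecMul_inc h t hne]
  have h1 := hk (h e)
  have h2 := hk (t e)
  have h3 : yr (h e) - yr (t e) = x e := by rw [← hyr, vecMul_inc h t hne]
  linarith

lemma rows_in_cutLattice (v : V) : (incMatrix h t v) ∈ cutLattice (incMatrix h t) := by
  constructor
  · have : incMatrix h t v = Pi.single v 1 ᵥ* incMatrix h t := by rw [single_one_vecMul]; rfl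
    rw [this]
    exact vecMul_mem_cutSpace _ _
  · intro e
    unfold incMatrix
    split_ifs
    · exact ⟨1, by norm_num⟩
    · exact ⟨-1, by norm_num⟩
    · exact ⟨0, by norm_num⟩

lemma div0_rep (hne : ∀ e, h e ≠ t e) (hconn : (mgUnderlying (wOf h t)).Connected)
    (d : V → ℤ) (hd : ∑ v, d v = 0) :
    ∃ b, b ∈ dualLatticeSub (incMatrix h t) ∧
      incMatrix h t *ᵥ b = fun v => (d v : ℝ) := by
  classical
  obtain ⟨v₀⟩ := hconn.nonempty
  choose F hF using fun u => reach_single_diff h t hne (hconn.preconnected u v₀)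
  set x₀ : E → ℝ := ∑ u, (d u : ℝ) • F u with hx₀def
  have hx₀ : incMatrix h t *ᵥ x₀ = fun v => (d v : ℝ) := by
    have hlin : (incMatrix h t).mulVecLin x₀ = ∑ u, (d u : ℝ) • (incMatrix h t).mulVecLin (F u) := by
      rw [hx₀def, map_sum]
      simp
    funext v
    have := congrFun hlin v
    simp only [Matrix.mulVecLin_apply] at this
    rw [this]
    have : ∀ u, ((d u : ℝ) • (incMatrix h t *ᵥ F u)) v
        = (d u : ℝ) * ((Pi.single u (1:ℝ) : V → ℝ) v - (Pi.single v₀ (1:ℝ) : V → ℝ) v) := by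
      intro u
      rw [hF u]
      simp
    rw [Finset.sum_apply, Finset.sum_congr rfl fun u _ => this u]
    have hsplit : ∑ u, (d u : ℝ) * ((Pi.single u (1:ℝ) : V → ℝ) v - (Pi.single v₀ (1:ℝ) : V → ℝ) v)
        = (∑ u, (d u : ℝ) * (Pi.single u (1:ℝ) : V → ℝ) v) - (∑ u, (d u : ℝ)) * (Pi.single v₀ (1:ℝ) : V → ℝ) v := by
      rw [Finset.sum_mul, ← Finset.sum_sub_distrib]
      exact Finset.sum_congr rfl (by intros; ring)
    rw [hsplit]
    have hzero : (∑ u, (d u : ℝ)) = 0 := by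
      rw [← Int.cast_sum, hd, Int.cast_zero]
    rw [hzero, zero_mul, sub_zero]
    simp [Pi.single_apply, mul_ite]
  obtain ⟨z, b, hsum, hz, hb⟩ := exists_decomp (incMatrix h t) x₀
  have hDb : incMatrix h t *ᵥ b = fun v => (d v : ℝ) := by
    rw [← hx₀, hsum, Matrix.mulVec_add, hz, zero_add]
  refine ⟨b, ⟨hb, ?_⟩, hDb⟩
  intro c hc
  obtain ⟨y, hy⟩ := cutLattice_int_rep h t hne hconn hc
  refine ⟨∑ v, y v * d v, ?_⟩
  rw [← hy, dotProduct_comm, ← dotProduct_mulVec, hDb]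
  push_cast
  simp [dotProduct]

end CombAux2


/-- for a connected oriented loopless multigraph with incidence matrix `D`, the
Jacobian `Jac(G) = Div⁰(G)/Prin(G)` is isomorphic as an abelian group to `B_I^#/B_I`. -/
theorem stmt15 (V E : Type*) [Fintype V] [Fintype E] [DecidableEq V]
    (h t : E → V) (hne : ∀ e : E, h e ≠ t e)
    (hconn : (mgUnderlying (wOf h t)).Connected) :
    Nonempty (mgJac V (wOf h t) ≃+
      (dualLatticeSub (incMatrix h t) ⧸
        (cutLatticeSub (incMatrix h t)).addSubgroupOf (dualLatticeSub (incMatrix h t)))) := by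
  classical
  set D := incMatrix h t with hD
  have hintval : ∀ x ∈ dualLatticeSub D, ∀ v, ∃ k : ℤ, (D *ᵥ x) v = (k : ℝ) := by
    intro x hx v
    obtain ⟨k, hk⟩ := hx.2 (D v) (rows_in_cutLattice h t v)
    refine ⟨k, ?_⟩
    rw [← hk]
    exact dotProduct_comm (D v) x
  let f : (E → ℝ) → (V → ℤ) := fun x v => ⌊(D *ᵥ x) v⌋
  have hf : ∀ x ∈ dualLatticeSub D, ∀ v, ((f x v : ℤ) : ℝ) = (D *ᵥ x) v := by
    intro x hx v
    obtain ⟨k, hk⟩ := hintval x hx v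
    simp only [f, hk, Int.floor_intCast]
  let toDiv : dualLatticeSub D →+ (V → ℤ) := AddMonoidHom.mk' (fun x => f x.1)
    (by
      rintro a b
      funext v
      have hab : (D *ᵥ ((a : E → ℝ) + (b : E → ℝ))) v
          = ((f a.1 v + f b.1 v : ℤ) : ℝ) := by
        push_cast [hf a.1 a.2 v, hf b.1 b.2 v]
        rw [Matrix.mulVec_add]
        rfl
      show f ((a + b : dualLatticeSub D) : E → ℝ) v = f a.1 v + f b.1 v
      have hco : ((a + b : dualLatticeSub D) : E → ℝ) = (a : E → ℝ) + (b : E → ℝ) := rfl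
      rw [hco]
      simp only [f, hab, Int.floor_intCast])
  have hsum : ∀ x : dualLatticeSub D, ∑ v, toDiv x v = 0 := by
    intro x
    have hcast : ((∑ v, toDiv x v : ℤ) : ℝ) = 0 := by
      rw [Int.cast_sum]
      have : ∀ v, ((toDiv x v : ℤ) : ℝ) = (D *ᵥ x.1) v := fun v => hf x.1 x.2 v
      rw [Finset.sum_congr rfl fun v _ => this v]
      show ∑ v, ∑ e, D v e * (x.1 : E → ℝ) e = (0:ℝ)
      rw [Finset.sum_comm]
      have : ∀ e, ∑ v, D v e * x.1 e = 0 := by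
        intro e
        rw [← Finset.sum_mul, colsum_inc h t hne, zero_mul]
      rw [Finset.sum_congr rfl fun e _ => this e, Finset.sum_const, smul_zero]
    exact_mod_cast hcast
  let ψ₀ : dualLatticeSub D →+ mgDiv0 V := AddMonoidHom.mk'
    (fun x => ⟨toDiv x, by
      simp only [mgDiv0, AddMonoidHom.mem_ker, AddMonoidHom.mk'_apply]
      exact hsum x⟩)
    (fun a b => Subtype.ext (toDiv.map_add a b))
  let π := QuotientAddGroup.mk' ((mgPrin (wOf h t)).addSubgroupOf (mgDiv0 V))
  let ψ : dualLatticeSub D →+ mgJac V (wOf h t) := π.comp ψ₀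
  have hsurj : Function.Surjective ψ := by
    intro q
    obtain ⟨d, rfl⟩ := QuotientAddGroup.mk'_surjective _ q
    have hd : ∑ v, d.1 v = 0 := by
      have hmem := d.2
      simp only [mgDiv0, AddMonoidHom.mem_ker, AddMonoidHom.mk'_apply] at hmem
      exact hmem
    obtain ⟨b, hb, hDb⟩ := div0_rep h t hne hconn d.1 hd
    refine ⟨⟨b, hb⟩, ?_⟩
    have hψ₀ : ψ₀ ⟨b, hb⟩ = d := by
      apply Subtype.ext
      funext v
      show ⌊(D *ᵥ b) v⌋ = d.1 v
      rw [congrFun hDb v, Int.floor_intCast]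
    show π (ψ₀ ⟨b, hb⟩) = π d
    rw [hψ₀]
  have hker : ψ.ker = (cutLatticeSub D).addSubgroupOf (dualLatticeSub D) := by
    ext x
    simp only [AddMonoidHom.mem_ker, AddSubgroup.mem_addSubgroupOf]
    constructor
    · intro hx0
      have hmem : (ψ₀ x : V → ℤ) ∈ ((mgPrin (wOf h t)).addSubgroupOf (mgDiv0 V)).map
          (mgDiv0 V).subtype := by
        have h0 : (ψ₀ x) ∈ (mgPrin (wOf h t)).addSubgroupOf (mgDiv0 V) :=
          (QuotientAddGroup.eq_zero_iff _).mp hx0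
        exact ⟨ψ₀ x, h0, rfl⟩
      have hmem' : (ψ₀ x : V → ℤ) ∈ mgPrin (wOf h t) := by
        obtain ⟨z, hz, hz'⟩ := hmem
        rw [← hz']
        exact (AddSubgroup.mem_addSubgroupOf.mp hz)
      obtain ⟨y, hy⟩ := hmem'
      have hfl : ∀ v, toDiv x v = mgLap (wOf h t) y v := by
        intro v
        exact (congrFun hy v).symm
      have hcast : D *ᵥ x.1 = fun v => ((mgLap (wOf h t) y v : ℤ) : ℝ) := by
        funext v
        rw [← hf x.1 x.2 v]
        exact_mod_cast congrArg (fun z : ℤ => (z : ℝ)) (hfl v)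
      set b := (fun v => (y v : ℝ)) ᵥ* D with hbdef
      have hDb : D *ᵥ b = D *ᵥ x.1 := by
        rw [hcast, hbdef, hD, mulVec_vecMul_eq_lap h t hne]
      have hcut : x.1 - b ∈ cutSpace D :=
        Submodule.sub_mem _ x.2.1 (vecMul_mem_cutSpace D _)
      have hcyc : x.1 - b ∈ cycleSpace D := by
        show D.mulVecLin (x.1 - b) = 0
        rw [map_sub]
        simp only [Matrix.mulVecLin_apply, hDb, sub_self]
      have hzero : x.1 - b = 0 := by
        have hself := hcut _ hcyc
        rwa [dotProduct_self_eq_zero] at hself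
      have hxb : x.1 = b := by rwa [sub_eq_zero] at hzero
      refine ⟨x.2.1, ?_⟩
      intro e
      rw [hxb, hbdef, hD, vecMul_inc h t hne]
      exact ⟨y (h e) - y (t e), by push_cast; ring⟩
    · intro hx
      obtain ⟨y, hy⟩ := cutLattice_int_rep h t hne hconn hx
      have hcast : D *ᵥ x.1 = fun v => ((mgLap (wOf h t) y v : ℤ) : ℝ) := by
        conv_lhs => rw [← hy]
        rw [hD, mulVec_vecMul_eq_lap h t hne]
      have htd : toDiv x = mgLap (wOf h t) y := by
        funext v
        show ⌊(D *ᵥ x.1) v⌋ = _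
        rw [congrFun hcast v, Int.floor_intCast]
      show π (ψ₀ x) = 0
      apply (QuotientAddGroup.eq_zero_iff _).mpr
      rw [AddSubgroup.mem_addSubgroupOf]
      exact ⟨y, htd.symm⟩
  exact ⟨(QuotientAddGroup.quotientKerEquivOfSurjective ψ hsurj).symm.trans
    (QuotientAddGroup.quotientAddEquivOfEq hker)⟩
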